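/- Let W ∈ 𝓜 be a branch word. Define pairs of integers p_M^X = (p_{M;S}^X, p_{M;T}^X) for M ∈ {K,S,T} and X ∈ 𝓜 by the initial conditions p_K^1 = (1,−1), p_S^1 = (0,1), p_T^1 = (−1,0), and the recursion (for all X ∈ 𝓜, writing (a,b) = p_M^X): p_M^{SX} = (a+b, b) and p_M^{TX} = (−b, −a−b) (letters prepended). Then for every X ∈ 𝓜: c_K^{WX} = −𝔠 + p_{K;S}^X · x_SK^W + p_{K;T}^X · x_TK^W, and for M ∈ {S,T}: c_M^{WX} = 𝔠 + p_{M;S}^X · x_SK^W + p_{M;T}^X · x_TK^W, where 𝔠 = ẽ₁ + ẽ₂ + ẽ₃. -/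

import Mathlib

namespace Markov

/-- The ambient space ℝ³. -/
abbrev V3 : Type := Fin 3 → ℝ

/-- Standard basis vectors ẽ₁, ẽ₂, ẽ₃ (indexed by `Fin 3`). -/
noncomputable def e (i : Fin 3) : V3 := Pi.single i 1

/-- The two generating letters of the free monoid 𝓜. -/
inductive Lt
  | S
  | T
  deriving DecidableEq

/-- Elements of the free monoid 𝓜 on `{S, T}`, as words (lists of letters
read left to right); the monoid operation is `++` and the identity is `[]`. -/
abbrev Word := List Lt

/-- A word is a trunk word iff it consists only of the letter `S`
(otherwise it is a branch word). -/
def IsTrunk (X : Word) : Prop := ∀ l ∈ X, l = Lt.S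

/-- Boolean trunk test. -/
def trunkB (X : Word) : Bool := X.all (fun l => decide (l = Lt.S))

/-- One mutation step for the triple `(g_K, g_S, g_T)`; the flag `trunk`
records whether the word being extended (on the right) is a trunk word. -/
noncomputable def gStep (trunk : Bool) (l : Lt) (v : V3 × V3 × V3) :
    V3 × V3 × V3 :=
  match l with
  | Lt.S => (2 • v.1 - v.2.1, v.1, v.2.2)
  | Lt.T =>
    if trunk then (2 • v.2.1 - v.2.2, v.2.1, v.1)
    else (2 • v.1 - v.2.2, v.1, v.2.1)

/-- Auxiliary recursion computing the g-vectors from the reversed word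
(head of the list = last letter of the word). -/
noncomputable def gRev (k s t : Fin 3) : Word → V3 × V3 × V3
  | [] => (2 • e s - e k, e s, e t)
  | l :: X => gStep (trunkB X) l (gRev k s t X)

/-- The triple of modified g-vectors `(g_K^X, g_S^X, g_T^X)` for the
permutation `(k₀, s₀, t₀) = (k, s, t)` of the indices. -/
noncomputable def g (k s t : Fin 3) (X : Word) : V3 × V3 × V3 :=
  gRev k s t X.reverse

/-- One mutation step for the triple `(c_K, c_S, c_T)`. -/
noncomputable def cStep (trunk : Bool) (l : Lt) (v : V3 × V3 × V3) :
    V3 × V3 × V3 :=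
  match l with
  | Lt.S => (-v.2.1, v.1 + 2 • v.2.1, v.2.2)
  | Lt.T =>
    if trunk then (-v.2.2, v.2.1 + 2 • v.2.2, v.1)
    else (-v.2.2, v.1 + 2 • v.2.2, v.2.1)

noncomputable def cRev (k s t : Fin 3) : Word → V3 × V3 × V3
  | [] => (-(e k), e s + 2 • e k, e t)
  | l :: X => cStep (trunkB X) l (cRev k s t X)

/-- The triple of modified c-vectors `(c_K^X, c_S^X, c_T^X)`. -/
noncomputable def c (k s t : Fin 3) (X : Word) : V3 × V3 × V3 :=
  cRev k s t X.reverse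

/-- `g_F^X = g_S^X + g_T^X − g_K^X`. -/
noncomputable def gF (k s t : Fin 3) (X : Word) : V3 :=
  (g k s t X).2.1 + (g k s t X).2.2 - (g k s t X).1

/-- `v_SK^X = g_K^X − g_S^X`. -/
noncomputable def vSK (k s t : Fin 3) (X : Word) : V3 :=
  (g k s t X).1 - (g k s t X).2.1

/-- `v_TK^X = g_K^X − g_T^X`. -/
noncomputable def vTK (k s t : Fin 3) (X : Word) : V3 :=
  (g k s t X).1 - (g k s t X).2.2

/-- `c_F^X = c_K^X + c_S^X + c_T^X`. -/
noncomputable def cF (k s t : Fin 3) (X : Word) : V3 :=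
  (c k s t X).1 + (c k s t X).2.1 + (c k s t X).2.2

/-- `x_SK^X = c_K^X + c_S^X`. -/
noncomputable def xSK (k s t : Fin 3) (X : Word) : V3 :=
  (c k s t X).1 + (c k s t X).2.1

/-- `x_TK^X = −(c_K^X + c_T^X)`. -/
noncomputable def xTK (k s t : Fin 3) (X : Word) : V3 :=
  -((c k s t X).1 + (c k s t X).2.2)

/-- Closed cone spanned by two vectors. -/
def C2 (v1 v2 : V3) : Set V3 :=
  {x | ∃ la lb : ℝ, 0 ≤ la ∧ 0 ≤ lb ∧ x = la • v1 + lb • v2}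

/-- Relatively open cone spanned by two vectors. -/
def C2o (v1 v2 : V3) : Set V3 :=
  {x | ∃ la lb : ℝ, 0 < la ∧ 0 < lb ∧ x = la • v1 + lb • v2}

/-- Closed cone spanned by three vectors. -/
def C3 (v1 v2 v3 : V3) : Set V3 :=
  {x | ∃ la lb lc : ℝ, 0 ≤ la ∧ 0 ≤ lb ∧ 0 ≤ lc ∧ x = la • v1 + lb • v2 + lc • v3}

/-- Relatively open cone spanned by four vectors. -/
def C4o (v1 v2 v3 v4 : V3) : Set V3 :=
  {x | ∃ la lb lc ld : ℝ, 0 < la ∧ 0 < lb ∧ 0 < lc ∧ 0 < ld ∧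
    x = la • v1 + lb • v2 + lc • v3 + ld • v4}

/-- The set `U_∘^X = C°(g_S^X, g_T^X, v_SK^X, v_TK^X)`. -/
noncomputable def Uo (k s t : Fin 3) (X : Word) : Set V3 :=
  C4o (g k s t X).2.1 (g k s t X).2.2 (vSK k s t X) (vTK k s t X)

/-- The set `U^W = U_∘^W ∪ C(g_S^W, g_T^W)`. -/
noncomputable def Uset (k s t : Fin 3) (W : Word) : Set V3 :=
  Uo k s t W ∪ C2 (g k s t W).2.1 (g k s t W).2.2

/-- Recursion step for the Calkin–Wilf-type coefficients `q`. -/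
def qstep (l : Lt) (p : ℤ × ℤ) : ℤ × ℤ :=
  match l with
  | Lt.S => (p.1 + p.2, p.2)
  | Lt.T => (p.2, p.1 + p.2)

/-- `qfun init X` : the pair obtained from `init` by the recursion
`q^{SX} = (a+b, b)`, `q^{TX} = (b, a+b)` (letters prepended). -/
def qfun (init : ℤ × ℤ) : Word → ℤ × ℤ
  | [] => init
  | l :: X => qstep l (qfun init X)

/-- Recursion step for the coefficients `p`. -/
def pstep (l : Lt) (p : ℤ × ℤ) : ℤ × ℤ :=
  match l with
  | Lt.S => (p.1 + p.2, p.2)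
  | Lt.T => (-p.2, -p.1 - p.2)

/-- `pfun init X` : the pair obtained from `init` by the recursion
`p^{SX} = (a+b, b)`, `p^{TX} = (−b, −a−b)` (letters prepended). -/
def pfun (init : ℤ × ℤ) : Word → ℤ × ℤ
  | [] => init
  | l :: X => pstep l (pfun init X)

/-- The three index data `σ₁ = (1,3,2)`, `σ₂ = (2,1,3)`, `σ₃ = (3,2,1)`
(written with indices `0,1,2` instead of `1,2,3`). -/
def sig : Fin 3 → Fin 3 × Fin 3 × Fin 3 :=
  ![(0, 2, 1), (1, 0, 2), (2, 1, 0)]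

/-- Modified g-vectors for the `i`-th subtree of the Markov quiver. -/
noncomputable def gM (i : Fin 3) (X : Word) : V3 × V3 × V3 :=
  g (sig i).1 (sig i).2.1 (sig i).2.2 X

/-- `𝔤ᵢ = ẽ_{s₀(i)} + ẽ_{t₀(i)} − ẽ_{k₀(i)}`. -/
noncomputable def giFrak (i : Fin 3) : V3 :=
  e (sig i).2.1 + e (sig i).2.2 - e (sig i).1

/-- The set `𝔊ᵢ` of modified g-vectors in the `i`-th subtree. -/
noncomputable def Gset (i : Fin 3) : Set V3 :=
  {v | ∃ a b : ℤ, 1 ≤ a ∧ 1 ≤ b ∧ Int.gcd a b = 1 ∧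
      v = giFrak i + (a : ℝ) • (e (sig i).1 - e (sig i).2.2) +
        (b : ℝ) • (e (sig i).2.1 - e (sig i).1)} ∪
    {e (sig i).2.1}

/-- The support `𝒮` of the G-fan of the Markov quiver. -/
noncomputable def Supp : Set V3 :=
  C3 (e 0) (e 1) (e 2) ∪
    ⋃ (i : Fin 3), ⋃ (X : Word), C3 (gM i X).1 (gM i X).2.1 (gM i X).2.2

/-- The half space `V = {x : x₁+x₂+x₃ > 0} ∪ {0}`. -/
def Vhalf : Set V3 := {x | 0 < x 0 + x 1 + x 2} ∪ {0}

lemma pstep_add (l : Lt) (p q : ℤ × ℤ) : pstep l (p + q) = pstep l p + pstep l q := by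
  cases l <;> refine Prod.ext ?_ ?_ <;> simp [pstep] <;> ring

lemma pfun_add (p q : ℤ × ℤ) : ∀ X : Word, pfun (p + q) X = pfun p X + pfun q X
  | [] => rfl
  | l :: X => by simp [pfun, pfun_add p q X, pstep_add]

lemma pstep_neg (l : Lt) (p : ℤ × ℤ) : pstep l (-p) = -pstep l p := by
  cases l <;> refine Prod.ext ?_ ?_ <;> simp [pstep] <;> ring

lemma pfun_neg (p : ℤ × ℤ) : ∀ X : Word, pfun (-p) X = -pfun p X
  | [] => rfl
  | l :: X => by simp [pfun, pfun_neg p X, pstep_neg]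

lemma pfun_append (init : ℤ × ℤ) (l : Lt) :
    ∀ X : Word, pfun init (X ++ [l]) = pfun (pstep l init) X
  | [] => rfl
  | a :: X => by simp [pfun, pfun_append init l X]

lemma trunkB_false (W X : Word) (hW : ¬ IsTrunk W) : trunkB ((W ++ X).reverse) = false := by
  obtain ⟨a, ha, hne⟩ : ∃ a ∈ W, ¬ a = Lt.S := by
    simpa [IsTrunk] using hW
  rw [trunkB, List.all_eq_false]
  exact ⟨a, by simp [ha], by simp [hne]⟩

lemma c_append (k s t : Fin 3) (Y : Word) (l : Lt) :
    c k s t (Y ++ [l]) = cStep (trunkB Y.reverse) l (c k s t Y) := by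
  simp [c, cRev, List.reverse_append]

lemma cRev_sum (k s t : Fin 3) :
    ∀ Y : Word, (cRev k s t Y).1 + (cRev k s t Y).2.1 + (cRev k s t Y).2.2
      = e k + e s + e t
  | [] => by simp only [cRev]; abel
  | l :: Y => by
    have h := cRev_sum k s t Y
    cases l
    · simp only [cRev, cStep]
      rw [← h]; abel
    · simp only [cRev, cStep]
      split <;> (rw [← h]; simp only [two_smul]; abel)

lemma c_sum (k s t : Fin 3) (hks : k ≠ s) (hkt : k ≠ t) (hst : s ≠ t) (W : Word) :
    (c k s t W).1 + (c k s t W).2.1 + (c k s t W).2.2 = e 0 + e 1 + e 2 := by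
  rw [c, cRev_sum]
  fin_cases k <;> fin_cases s <;> fin_cases t <;> simp_all <;> abel

/-- recursive formula for c-vectors in a branch. -/
theorem stmt_9 (k s t : Fin 3) (hks : k ≠ s) (hkt : k ≠ t) (hst : s ≠ t)
    (W : Word) (hW : ¬ IsTrunk W) :
    ∀ X : Word,
      (c k s t (W ++ X)).1 = -(e 0 + e 1 + e 2) +
        ((pfun (1, -1) X).1 : ℝ) • xSK k s t W +
        ((pfun (1, -1) X).2 : ℝ) • xTK k s t W ∧
      (c k s t (W ++ X)).2.1 = (e 0 + e 1 + e 2) +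
        ((pfun (0, 1) X).1 : ℝ) • xSK k s t W +
        ((pfun (0, 1) X).2 : ℝ) • xTK k s t W ∧
      (c k s t (W ++ X)).2.2 = (e 0 + e 1 + e 2) +
        ((pfun (-1, 0) X).1 : ℝ) • xSK k s t W +
        ((pfun (-1, 0) X).2 : ℝ) • xTK k s t W := by
  intro X
  induction X using List.reverseRecOn with
  | nil =>
    have h := c_sum k s t hks hkt hst W
    simp only [List.append_nil, pfun, xSK, xTK]
    rw [← h]
    push_cast
    refine ⟨?_, ?_, ?_⟩ <;> module
  | append_singleton X l ih =>
    obtain ⟨hK, hS, hT⟩ := ih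
    have htr := trunkB_false W X hW
    rw [← List.append_assoc, c_append, htr]
    cases l
    · have e1 : pfun (1, -1) (X ++ [Lt.S]) = -(pfun (0, 1) X) := by
        rw [pfun_append, show pstep Lt.S (1, -1) = -((0 : ℤ), (1 : ℤ)) from by decide,
          pfun_neg]
      have e2 : pfun (0, 1) (X ++ [Lt.S])
          = pfun (1, -1) X + (pfun (0, 1) X + pfun (0, 1) X) := by
        rw [pfun_append,
          show pstep Lt.S (0, 1) = ((1 : ℤ), (-1 : ℤ)) + (((0 : ℤ), (1 : ℤ)) + ((0 : ℤ), (1 : ℤ))) from by decide,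
          pfun_add, pfun_add]
      have e3 : pfun (-1, 0) (X ++ [Lt.S]) = pfun (-1, 0) X := by
        rw [pfun_append]; rfl
      rw [e1, e2, e3]
      simp only [cStep, Prod.fst_add, Prod.snd_add, Prod.fst_neg, Prod.snd_neg]
      push_cast
      rw [hK, hS, hT]
      refine ⟨?_, ?_, ?_⟩ <;> module
    · have e1 : pfun (1, -1) (X ++ [Lt.T]) = -(pfun (-1, 0) X) := by
        rw [pfun_append, show pstep Lt.T (1, -1) = -((-1 : ℤ), (0 : ℤ)) from by decide,
          pfun_neg]
      have e2 : pfun (0, 1) (X ++ [Lt.T])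
          = pfun (1, -1) X + (pfun (-1, 0) X + pfun (-1, 0) X) := by
        rw [pfun_append,
          show pstep Lt.T (0, 1) = ((1 : ℤ), (-1 : ℤ)) + (((-1 : ℤ), (0 : ℤ)) + ((-1 : ℤ), (0 : ℤ))) from by decide,
          pfun_add, pfun_add]
      have e3 : pfun (-1, 0) (X ++ [Lt.T]) = pfun (0, 1) X := by
        rw [pfun_append]; rfl
      rw [e1, e2, e3]
      simp only [cStep, Prod.fst_add, Prod.snd_add, Prod.fst_neg, Prod.snd_neg,
        Bool.false_eq_true, if_false]
      push_cast
      rw [hK, hS, hT]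
      refine ⟨?_, ?_, ?_⟩ <;> module

end Markov
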